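/- Let D be a finite set, Γ a set of relations on D closed under the polymorphism operations, and suppose for each r there is an r-ary symmetric polymorphism. Let J ⊆ D be minimal such that J = f(D) for some unary polymorphism f of Γ. Then for every r >= 1 there is an r-ary symmetric polymorphism g of Γ with g(x,...,x) = x for every x ∈ J. -/

import Mathlib

/-- Let `D` be finite and `Γ` (given as an indexed family of relations) have an
`r`-ary symmetric polymorphism for every `r`.  Let `J ⊆ D` be minimal with `J = f(D)` for some
unary polymorphism `f` of `Γ`.  Then for every `r ≥ 1` there is an `r`-ary symmetric polymorphism
`g` of `Γ` with `g(x,...,x) = x` for every `x ∈ J`. -/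
theorem stmt14 (D : Type) [Fintype D]
    (ι : Type) (ar : ι → ℕ) (rel : (i : ι) → Set (Fin (ar i) → D))
    (hsym : ∀ r : ℕ, ∃ f : (Fin r → D) → D,
      (∀ (σ : Equiv.Perm (Fin r)) (x : Fin r → D), f (x ∘ σ) = f x) ∧
      (∀ (i : ι) (t : Fin r → Fin (ar i) → D), (∀ a, t a ∈ rel i) →
        (fun j => f (fun a => t a j)) ∈ rel i))
    (J : Set D)
    (hJ : ∃ f : D → D, (∀ (i : ι) (t : Fin (ar i) → D), t ∈ rel i → (f ∘ t) ∈ rel i) ∧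
      Set.range f = J)
    (hmin : ∀ f : D → D, (∀ (i : ι) (t : Fin (ar i) → D), t ∈ rel i → (f ∘ t) ∈ rel i) →
      Set.range f ⊆ J → Set.range f = J) :
    ∀ r : ℕ, 1 ≤ r → ∃ g : (Fin r → D) → D,
      (∀ (σ : Equiv.Perm (Fin r)) (x : Fin r → D), g (x ∘ σ) = g x) ∧
      (∀ (i : ι) (t : Fin r → Fin (ar i) → D), (∀ a, t a ∈ rel i) →
        (fun j => g (fun a => t a j)) ∈ rel i) ∧
      (∀ x ∈ J, g (fun _ => x) = x) := by
  obtain ⟨f, hfpol, hfrange⟩ := hJ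
  intro r hr
  obtain ⟨g0, hg0sym, hg0pol⟩ := hsym r
  set d : D → D := fun x => g0 (fun _ => x) with hd
  have hdpol : ∀ (i : ι) (t : Fin (ar i) → D), t ∈ rel i → (d ∘ t) ∈ rel i := by
    intro i t ht
    have := hg0pol i (fun _ => t) (fun _ => ht)
    exact this
  set h : D → D := f ∘ d with hh
  have hhpol : ∀ (i : ι) (t : Fin (ar i) → D), t ∈ rel i → (h ∘ t) ∈ rel i := by
    intro i t ht
    have := hfpol i (d ∘ t) (hdpol i t ht)
    exact this
  have hrangesub : Set.range h ⊆ J := by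
    rintro _ ⟨x, rfl⟩
    rw [← hfrange]; exact ⟨d x, rfl⟩
  have hrange : Set.range h = J := hmin h hhpol hrangesub
  have hiterpol : ∀ n, ∀ (i : ι) (t : Fin (ar i) → D), t ∈ rel i → (h^[n] ∘ t) ∈ rel i := by
    intro n
    induction n with
    | zero => intro i t ht; simpa using ht
    | succ n ih =>
      intro i t ht
      have := hhpol i (h^[n] ∘ t) (ih i t ht)
      have heq : (h^[n+1] ∘ t) = h ∘ (h^[n] ∘ t) := by
        funext j; simp [Function.iterate_succ_apply', Function.comp]
      rw [heq]; exact this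
  have hmaps : Set.MapsTo h J J := by
    intro x hx; rw [← hrange]; exact ⟨x, rfl⟩
  have hsurj : Set.SurjOn h J J := by
    intro y hy
    have hr2 : Set.range (h^[2]) = J := by
      apply hmin _ (hiterpol 2)
      rintro _ ⟨x, rfl⟩
      rw [← hrange]
      exact ⟨h x, by simp [Function.iterate_succ_apply']⟩
    rw [← hr2] at hy
    obtain ⟨x, hx⟩ := hy
    refine ⟨h x, hrange ▸ ⟨x, rfl⟩, ?_⟩
    simpa [Function.iterate_succ_apply'] using hx
  let e : J → J := Set.MapsTo.restrict h J J hmaps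
  have hesurj : Function.Surjective e := by
    rintro ⟨y, hy⟩
    obtain ⟨x, hx, hxy⟩ := hsurj hy
    exact ⟨⟨x, hx⟩, Subtype.ext hxy⟩
  have hebij : Function.Bijective e := Finite.surjective_iff_bijective.mp hesurj
  let ep : Equiv.Perm J := Equiv.ofBijective e hebij
  set k := orderOf ep with hkdef
  have hkpos : 0 < k := orderOf_pos ep
  have hk1 : ep ^ k = 1 := pow_orderOf_eq_one ep
  have key : ∀ n (z : J), ((e^[n] z : J) : D) = h^[n] (z : D) := by
    intro n
    induction n with
    | zero => intro z; simp
    | succ n ih =>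
      intro z
      rw [Function.iterate_succ_apply, Function.iterate_succ_apply]
      exact ih (e z)
  have hfix : ∀ x ∈ J, h^[k] x = x := by
    intro x hx
    have h1 : e^[k] ⟨x, hx⟩ = ⟨x, hx⟩ := by
      have : (ep ^ k) ⟨x, hx⟩ = ⟨x, hx⟩ := by rw [hk1]; rfl
      rwa [← Equiv.Perm.iterate_eq_pow] at this
    have := key k ⟨x, hx⟩
    rw [h1] at this
    exact this.symm
  obtain ⟨m, hm⟩ : ∃ m, k = m + 1 := ⟨k - 1, (Nat.succ_pred_eq_of_pos hkpos).symm⟩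
  refine ⟨fun x => h^[m] (f (g0 x)), ?_, ?_, ?_⟩
  · intro σ x
    show h^[m] (f (g0 (x ∘ ⇑σ))) = h^[m] (f (g0 x))
    rw [hg0sym σ x]
  · intro i t ht
    have hu := hg0pol i t ht
    have := hiterpol m i (f ∘ fun j => g0 (fun a => t a j)) (hfpol i _ hu)
    exact this
  · intro x hx
    show h^[m] (f (g0 (fun _ => x))) = x
    have : f (g0 (fun _ => x)) = h x := rfl
    rw [this, ← Function.iterate_succ_apply]
    have h2 := hfix x hx
    rw [hm] at h2
    exact h2
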